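/- Let E be a phase observable with phase matrix (c_{n,m}) and let A = {n ∈ ℕ : c_{n,m} = 0 for all m ≠ n}. Then every vector φ with ⟨n|φ⟩ = 0 whenever n ∉ A satisfies E(X)E(Y)φ = E(Y)E(X)φ for all Borel X, Y ⊆ [0,2π). Indeed, with P_A = ∑_{s∈A} |s⟩⟨s| one has E(X)P_A = (ℓ(X)/(2π)) P_A. -/

import Mathlib

open MeasureTheory Complex

/-- `phaseInt X n m = (1/2π) ∫_X e^{i(n-m)x} dx`. -/
noncomputable def phaseInt (X : Set ℝ) (n m : ℕ) : ℂ :=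
  ((1 / (2 * Real.pi) : ℝ) : ℂ) *
    ∫ x in X, Complex.exp (Complex.I * ((n : ℂ) - (m : ℂ)) * (x : ℂ))

/-- For a phase observable `E` with phase matrix `(c_{n,m})` let
`A = {n : c_{n,m} = 0 for all m ≠ n}`. Every vector `φ` supported (in the number basis)
on `A` satisfies `E(X)E(Y)φ = E(Y)E(X)φ`, and indeed `E(X)φ = (ℓ(X)/2π)·φ`. -/
theorem stmt11 {H : Type*} [NormedAddCommGroup H] [InnerProductSpace ℂ H] [CompleteSpace H]
    (e : HilbertBasis ℕ ℂ H) (ξ : ℕ → H) (hξ : ∀ n, ‖ξ n‖ = 1)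
    (c : ℕ → ℕ → ℂ) (hc : ∀ n m, c n m = (inner ℂ (ξ n) (ξ m) : ℂ))
    (E : Set ℝ → (H →L[ℂ] H))
    (hE : ∀ X : Set ℝ, MeasurableSet X → X ⊆ Set.Ico 0 (2 * Real.pi) → ∀ n m : ℕ,
      (inner ℂ (e n) (E X (e m)) : ℂ) = c n m * phaseInt X n m)
    (φ : H)
    (hφ : ∀ n : ℕ, n ∉ {n : ℕ | ∀ m : ℕ, m ≠ n → c n m = 0} → (inner ℂ (e n) φ : ℂ) = 0) :
    (∀ X : Set ℝ, MeasurableSet X → X ⊆ Set.Ico 0 (2 * Real.pi) →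
      E X φ = (((volume X).toReal / (2 * Real.pi) : ℝ) : ℂ) • φ) ∧
    (∀ X Y : Set ℝ, MeasurableSet X → MeasurableSet Y →
      X ⊆ Set.Ico 0 (2 * Real.pi) → Y ⊆ Set.Ico 0 (2 * Real.pi) →
      E X (E Y φ) = E Y (E X φ)) := by
  have hcnn : ∀ n, c n n = 1 := by
    intro n
    rw [hc, inner_self_eq_norm_sq_to_K, hξ]
    norm_num
  have hphase : ∀ (X : Set ℝ) (n : ℕ), phaseInt X n n = (((volume X).toReal : ℝ) : ℂ) / ((2 * Real.pi : ℝ) : ℂ) := by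
    intro X n
    unfold phaseInt
    have : ∀ x : ℝ, Complex.exp (Complex.I * ((n : ℂ) - (n : ℂ)) * (x : ℂ)) = 1 := by
      intro x; simp
    rw [MeasureTheory.integral_congr_ae (Filter.Eventually.of_forall this)]
    rw [MeasureTheory.setIntegral_const]
    simp [div_eq_mul_inv, mul_comm]
    rfl
  have key : ∀ X : Set ℝ, MeasurableSet X → X ⊆ Set.Ico 0 (2 * Real.pi) →
      E X φ = (((volume X).toReal / (2 * Real.pi) : ℝ) : ℂ) • φ := by
    intro X hXm hXs
    set s : ℂ := (((volume X).toReal / (2 * Real.pi) : ℝ) : ℂ) with hs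
    have hinner : ∀ n : ℕ, (inner ℂ (e n) (E X φ) : ℂ) = s * inner ℂ (e n) φ := by
      intro n
      set L : H →L[ℂ] ℂ := (innerSL ℂ (e n)).comp (E X) with hL
      have h1 : HasSum (fun m => L (e.repr φ m • e m)) (L φ) :=
        L.hasSum (e.hasSum_repr φ)
      have h2 : (fun m => L (e.repr φ m • e m)) =
          fun m => if m = n then s * e.repr φ n else 0 := by
        funext m
        have hLm : L (e.repr φ m • e m) = e.repr φ m * (inner ℂ (e n) (E X (e m)) : ℂ) := by
          simp [hL, inner_smul_right]
        by_cases hmn : m = n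
        · subst hmn
          rw [if_pos rfl, hLm, hE X hXm hXs m m, hcnn, hphase]
          rw [hs]
          push_cast
          ring
        · rw [if_neg hmn, hLm]
          by_cases hmA : m ∈ {n : ℕ | ∀ m' : ℕ, m' ≠ n → c n m' = 0}
          · have hcz : c n m = 0 := by
              have := hmA n (by exact fun h => hmn h.symm)
              rw [hc] at this ⊢
              rw [← inner_conj_symm, this, map_zero]
            rw [hE X hXm hXs n m, hcz, zero_mul, mul_zero]
          · have : e.repr φ m = 0 := by
              rw [e.repr_apply_apply]; exact hφ m hmA
            rw [this, zero_mul]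
      rw [h2] at h1
      have h3 : HasSum (fun m => if m = n then s * e.repr φ n else 0) (s * e.repr φ n) := by
        convert hasSum_ite_eq n (s * e.repr φ n) using 2 with m
      have h4 := h1.unique h3
      have hLφ : L φ = (inner ℂ (e n) (E X φ) : ℂ) := rfl
      rw [hLφ] at h4
      rw [h4, e.repr_apply_apply]
    apply e.repr.injective
    ext n
    rw [e.repr_apply_apply, e.repr_apply_apply, inner_smul_right, hinner]
  refine ⟨key, fun X Y hXm hYm hXs hYs => ?_⟩
  rw [key Y hYm hYs, (E X).map_smul, key X hXm hXs, (E Y).map_smul, key Y hYm hYs, smul_comm]
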